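/- Let n ≥ 1, let R be an n×n real upper triangular matrix with positive diagonal entries r_11,…,r_nn, let σ > 0, and let B = {x ∈ ℤⁿ : ℓ ≤ x ≤ u} with ℓ, u ∈ ℤⁿ and ℓ_i < u_i for all i. Fix a deterministic x̂ ∈ B, let ṽ ~ N(0, σ²Iₙ), set ỹ = R x̂ + ṽ, and let x^BB be the box-constrained Babai detector defined recursively for i = n,…,1 by c_i = (ỹ_i − ∑_{j=i+1}^n r_ij x_j^BB)/r_ii and x_i^BB = ℓ_i if ⌊c_i⌉ ≤ ℓ_i, x_i^BB = ⌊c_i⌉ if ℓ_i < ⌊c_i⌉ < u_i, x_i^BB = u_i if ⌊c_i⌉ ≥ u_i. Then ∏_{i=1}^n φ_σ(r_ii) ≤ Pr(x^BB = x̂) ≤ 2^{−n} ∏_{i=1}^n (1 + φ_σ(r_ii)); moreover the lower bound is attained if and only if ℓ_i < x̂_i < u_i for all i, and the upper bound is attained if and only if x̂_i ∈ {ℓ_i, u_i} for all i. -/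

import Mathlib

open MeasureTheory ProbabilityTheory Matrix
open scoped ENNReal NNReal

/-- Nearest integer rounding, with ties broken toward the integer of smaller magnitude. -/
noncomputable def nround (x : ℝ) : ℤ :=
  if 0 ≤ x then ⌈x - 1 / 2⌉ else ⌊x + 1 / 2⌋

/-- Clamp the nearest integer of `c` to the interval `[a, b]`:
`a` if `⌊c⌉ ≤ a`, `b` if `⌊c⌉ ≥ b`, and `⌊c⌉` otherwise. -/
noncomputable def clampInt (a b : ℤ) (c : ℝ) : ℤ :=
  if nround c ≤ a then a
  else if b ≤ nround c then b
  else nround c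

/-- The box-constrained rounding detector computed from `d`. -/
noncomputable def roundDetector {n : ℕ} (l u : Fin n → ℤ) (d : Fin n → ℝ) : Fin n → ℤ :=
  fun i => clampInt (l i) (u i) (d i)

/-- Auxiliary recursion for the box-constrained Babai detector: `babaiAux R l u y k`
has the correct Babai values at indices `i` with `i + k ≥ n` (computed from the last
index downwards). -/
noncomputable def babaiAux {n : ℕ} (R : Matrix (Fin n) (Fin n) ℝ) (l u : Fin n → ℤ)
    (y : Fin n → ℝ) : ℕ → Fin n → ℤ
  | 0 => fun _ => 0
  | k + 1 => fun i =>
      if i.val + (k + 1) = n then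
        clampInt (l i) (u i)
          ((y i - ∑ j : Fin n, if i < j then R i j * (babaiAux R l u y k j : ℝ) else 0) / R i i)
      else babaiAux R l u y k i

/-- The box-constrained Babai detector computed from `y`, for upper triangular `R`:
for `i = n, …, 1`, `c_i = (y_i - ∑_{j>i} r_{ij} x_j^BB)/r_{ii}` and `x_i^BB` is `⌊c_i⌉`
clamped to `[l_i, u_i]`. -/
noncomputable def babaiDetector {n : ℕ} (R : Matrix (Fin n) (Fin n) ℝ) (l u : Fin n → ℤ)
    (y : Fin n → ℝ) : Fin n → ℤ :=
  babaiAux R l u y n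

/-- `phi σ ζ = (2/√(2π)) ∫_0^{ζ/(2σ)} exp(-t²/2) dt`. -/
noncomputable def phi (σ ζ : ℝ) : ℝ :=
  2 / Real.sqrt (2 * Real.pi) * ∫ t in (0:ℝ)..(ζ / (2 * σ)), Real.exp (-(t ^ 2) / 2)

/-! ### Auxiliary lemmas -/

section Aux
open Set Real

/-- Abbreviation for the variance as a nonnegative real. -/
noncomputable def Vv (σ : ℝ) : ℝ≥0 := ⟨σ^2, sq_nonneg σ⟩

lemma nround_le (x : ℝ) : (nround x : ℝ) ≤ x + 1/2 := by
  unfold nround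
  split
  · have := Int.ceil_lt_add_one (x - 1/2)
    push_cast at this ⊢
    linarith
  · have := Int.floor_le (x + 1/2)
    linarith

lemma le_nround (x : ℝ) : x - 1/2 ≤ (nround x : ℝ) := by
  unfold nround
  split
  · have := Int.le_ceil (x - 1/2)
    linarith
  · have := Int.lt_floor_add_one (x + 1/2)
    push_cast at this ⊢
    linarith

lemma nround_int_add (m : ℤ) (s : ℝ) (hs : |s| < 1/2) : nround ((m : ℝ) + s) = m := by
  rw [abs_lt] at hs
  unfold nround
  split
  · have : (m : ℝ) + s - 1/2 = (s - 1/2) + m := by ring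
    rw [this, Int.ceil_add_intCast, Int.ceil_eq_zero_iff.mpr, zero_add]
    constructor <;> simp <;> linarith
  · have : (m : ℝ) + s + 1/2 = (s + 1/2) + m := by ring
    rw [this, Int.floor_add_intCast, Int.floor_eq_zero_iff.mpr, zero_add]
    constructor <;> simp <;> linarith

lemma clamp_interior {a b m : ℤ} (ha : a < m) (hb : m < b) {s : ℝ} (hs : |s| < 1/2) :
    clampInt a b ((m : ℝ) + s) = m := by
  have h := nround_int_add m s hs
  unfold clampInt
  rw [h]
  rw [if_neg (by omega), if_neg (by omega)]

lemma clamp_interior_rev {a b m : ℤ} (ha : a < m) (hb : m < b) {s : ℝ}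
    (h : clampInt a b ((m : ℝ) + s) = m) : |s| ≤ 1/2 := by
  have hnr : nround ((m:ℝ) + s) = m := by
    unfold clampInt at h
    split at h
    · omega
    · split at h
      · omega
      · exact h
  have h1 := nround_le ((m:ℝ) + s)
  have h2 := le_nround ((m:ℝ) + s)
  rw [hnr] at h1 h2
  rw [abs_le]; constructor <;> linarith

lemma clamp_left {a b : ℤ} {s : ℝ} (hs : s < 1/2) :
    clampInt a b ((a : ℝ) + s) = a := by
  have h1 := nround_le ((a:ℝ) + s)
  have hle : nround ((a:ℝ) + s) ≤ a := by
    have : (nround ((a:ℝ)+s) : ℝ) < (a:ℝ) + 1 := by linarith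
    exact_mod_cast Int.lt_add_one_iff.mp (by exact_mod_cast this)
  unfold clampInt
  rw [if_pos hle]

lemma clamp_left_rev {a b : ℤ} (hab : a < b) {s : ℝ}
    (h : clampInt a b ((a : ℝ) + s) = a) : s ≤ 1/2 := by
  have hle : nround ((a:ℝ) + s) ≤ a := by
    unfold clampInt at h
    split at h
    · assumption
    · split at h
      · omega
      · omega
  have h2 := le_nround ((a:ℝ) + s)
  have : (nround ((a:ℝ)+s) : ℝ) ≤ a := by exact_mod_cast hle
  linarith

lemma clamp_right {a b : ℤ} (hab : a < b) {s : ℝ} (hs : -(1/2) < s) :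
    clampInt a b ((b : ℝ) + s) = b := by
  have h2 := le_nround ((b:ℝ) + s)
  have hge : b ≤ nround ((b:ℝ) + s) := by
    have : (b:ℝ) - 1 < (nround ((b:ℝ)+s) : ℝ) := by linarith
    have := (by exact_mod_cast this : (b:ℤ) - 1 < nround ((b:ℝ)+s))
    omega
  unfold clampInt
  rw [if_neg (by omega), if_pos hge]

lemma clamp_right_rev {a b : ℤ} (hab : a < b) {s : ℝ}
    (h : clampInt a b ((b : ℝ) + s) = b) : -(1/2) ≤ s := by
  have hge : b ≤ nround ((b:ℝ) + s) := by
    unfold clampInt at h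
    split at h
    · omega
    · split at h
      · assumption
      · omega
  have h1 := nround_le ((b:ℝ) + s)
  have : (b:ℝ) ≤ (nround ((b:ℝ)+s) : ℝ) := by exact_mod_cast hge
  linarith

lemma measurable_nround : Measurable nround := by
  unfold nround
  refine Measurable.ite (measurableSet_le measurable_const measurable_id) ?_ ?_
  · exact (measurable_id.sub measurable_const).ceil
  · exact (measurable_id.add measurable_const).floor

lemma measurable_clampInt (a b : ℤ) : Measurable (clampInt a b) := by
  unfold clampInt
  refine Measurable.ite (measurable_nround (show MeasurableSet {z : ℤ | z ≤ a} from trivial))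
    measurable_const ?_
  exact Measurable.ite (measurable_nround (show MeasurableSet {z : ℤ | b ≤ z} from trivial))
    measurable_const measurable_nround

lemma babaiAux_stable {n : ℕ} (R : Matrix (Fin n) (Fin n) ℝ) (l u : Fin n → ℤ)
    (y : Fin n → ℝ) {k k' : ℕ} (h : k ≤ k') (i : Fin n) (hi : n ≤ i.val + k) :
    babaiAux R l u y k' i = babaiAux R l u y k i := by
  induction k' with
  | zero => omega
  | succ m ih =>
    rcases Nat.eq_or_lt_of_le h with h' | h'
    · rw [h']
    · have hm : k ≤ m := by omega
      have : babaiAux R l u y (m+1) i = babaiAux R l u y m i := by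
        show (if i.val + (m + 1) = n then _ else babaiAux R l u y m i) = babaiAux R l u y m i
        rw [if_neg (by omega)]
      rw [this, ih hm]

lemma babaiDetector_eq {n : ℕ} (R : Matrix (Fin n) (Fin n) ℝ) (l u : Fin n → ℤ)
    (y : Fin n → ℝ) (i : Fin n) :
    babaiDetector R l u y i = clampInt (l i) (u i)
      ((y i - ∑ j : Fin n, if i < j then R i j * (babaiDetector R l u y j : ℝ) else 0) / R i i) := by
  have hi : i.val < n := i.isLt
  have hk : n - i.val = (n - i.val - 1) + 1 := by omega
  have h1 : babaiDetector R l u y i = babaiAux R l u y (n - i.val) i :=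
    babaiAux_stable R l u y (by omega) i (by omega)
  rw [h1, hk]
  show (if i.val + ((n - i.val - 1) + 1) = n then
      clampInt (l i) (u i)
        ((y i - ∑ j : Fin n, if i < j then R i j * (babaiAux R l u y (n - i.val - 1) j : ℝ) else 0) / R i i)
    else _) = _
  rw [if_pos (by omega)]
  congr 2
  refine congrArg (fun z => y i - z) ?_
  apply Finset.sum_congr rfl
  intro j _
  by_cases hij : i < j
  · rw [if_pos hij, if_pos hij]
    have : babaiDetector R l u y j = babaiAux R l u y (n - i.val - 1) j := by
      apply babaiAux_stable R l u y (by omega) j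
      have : i.val < j.val := hij
      omega
    rw [this]
  · rw [if_neg hij, if_neg hij]

variable {n : ℕ} (R : Matrix (Fin n) (Fin n) ℝ)
  (l u : Fin n → ℤ) (xhat : Fin n → ℤ)

lemma babai_algebra (hupper : ∀ i j : Fin n, j < i → R i j = 0)
    (hdiag : ∀ i : Fin n, 0 < R i i) (w : Fin n → ℝ) (i : Fin n) (g : Fin n → ℤ)
    (hg : ∀ j, i < j → g j = xhat j) :
    ((R *ᵥ (fun j => (xhat j : ℝ))) i + w i
      - ∑ j : Fin n, if i < j then R i j * (g j : ℝ) else 0) / R i i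
      = (xhat i : ℝ) + w i / R i i := by
  have hMv : (R *ᵥ (fun j => (xhat j : ℝ))) i = ∑ j : Fin n, R i j * (xhat j : ℝ) := by
    simp [mulVec, dotProduct]
  have hsum : ∑ j : Fin n, R i j * (xhat j : ℝ)
      - (∑ j : Fin n, if i < j then R i j * (g j : ℝ) else 0) = R i i * (xhat i : ℝ) := by
    rw [← Finset.sum_sub_distrib]
    have : ∀ j ∈ Finset.univ, R i j * (xhat j : ℝ) - (if i < j then R i j * (g j : ℝ) else 0)
        = if j = i then R i i * (xhat i : ℝ) else 0 := by
      intro j _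
      rcases lt_trichotomy i j with h | h | h
      · rw [if_pos h, hg j h, if_neg (fun he => (ne_of_lt h) he.symm), sub_self]
      · rw [if_neg (by simp [h]), if_pos h.symm, h, sub_zero]
      · rw [if_neg (not_lt_of_gt h), if_neg (ne_of_lt h), hupper i j h, zero_mul, sub_zero]
    rw [Finset.sum_congr rfl this, Finset.sum_ite_eq' Finset.univ i (fun _ => R i i * (xhat i : ℝ)),
      if_pos (Finset.mem_univ i)]
  have hr : R i i ≠ 0 := (hdiag i).ne'
  rw [hMv]
  field_simp
  linarith [hsum]

lemma babai_success_iff (hupper : ∀ i j : Fin n, j < i → R i j = 0)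
    (hdiag : ∀ i : Fin n, 0 < R i i) (w : Fin n → ℝ) :
    babaiDetector R l u (fun i => (R *ᵥ (fun j => (xhat j : ℝ))) i + w i) = xhat
      ↔ ∀ i, clampInt (l i) (u i) ((xhat i : ℝ) + w i / R i i) = xhat i := by
  set y : Fin n → ℝ := fun i => (R *ᵥ (fun j => (xhat j : ℝ))) i + w i with hy
  constructor
  · intro h i
    have hi := babaiDetector_eq R l u y i
    have harg : (y i - ∑ j : Fin n, if i < j then R i j * ((babaiDetector R l u y) j : ℝ) else 0) / R i i
        = (xhat i : ℝ) + w i / R i i := by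
      exact babai_algebra R xhat hupper hdiag w i _ (fun j _ => by rw [h])
    rw [harg] at hi
    rw [← hi, h]
  · intro h
    have key : ∀ m : ℕ, ∀ i : Fin n, n - i.val ≤ m → babaiDetector R l u y i = xhat i := by
      intro m
      induction m with
      | zero => intro i hi; exact absurd hi (by have := i.isLt; omega)
      | succ m ih =>
        intro i hi
        have hdet := babaiDetector_eq R l u y i
        have harg : (y i - ∑ j : Fin n, if i < j then R i j * ((babaiDetector R l u y) j : ℝ) else 0) / R i i
            = (xhat i : ℝ) + w i / R i i := by
          apply babai_algebra R xhat hupper hdiag w i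
          intro j hj
          apply ih
          have : i.val < j.val := hj
          omega
        rw [harg] at hdet
        rw [hdet, h i]
    funext i
    exact key n i (by omega)

lemma hV_ne {σ : ℝ} (hσ : 0 < σ) : Vv σ ≠ 0 := by
  intro h
  have : σ^2 = 0 := congrArg NNReal.toReal h
  nlinarith

lemma gauss_pdf_eq {σ : ℝ} (hσ : 0 < σ) (x : ℝ) :
    gaussianPDFReal 0 (Vv σ) x = (Real.sqrt (2*π))⁻¹ * σ⁻¹ * Real.exp (-((x/σ)^2)/2) := by
  unfold gaussianPDFReal
  have hc : ((Vv σ : ℝ≥0) : ℝ) = σ^2 := rfl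
  rw [hc]
  have h1 : Real.sqrt (2*π*σ^2) = Real.sqrt (2*π) * σ := by
    rw [Real.sqrt_mul (by positivity), Real.sqrt_sq hσ.le]
  rw [h1, mul_inv]
  congr 1
  have : -(x-0)^2/(2*σ^2) = -((x/σ)^2)/2 := by
    field_simp
    ring
  rw [this]

lemma gauss_integral_interval {σ : ℝ} (hσ : 0 < σ) (a b : ℝ) :
    ∫ x in a..b, gaussianPDFReal 0 (Vv σ) x
      = (Real.sqrt (2*π))⁻¹ * ∫ t in (a/σ)..(b/σ), Real.exp (-(t^2)/2) := by
  have h1 : ∀ x ∈ Set.uIcc a b, gaussianPDFReal 0 (Vv σ) x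
      = (Real.sqrt (2*π))⁻¹ * σ⁻¹ * Real.exp (-(((x/σ))^2)/2) := fun x _ => gauss_pdf_eq hσ x
  rw [intervalIntegral.integral_congr h1, intervalIntegral.integral_const_mul]
  have h2 : (∫ x in a..b, Real.exp (-((x/σ)^2)/2))
      = σ • ∫ t in (a/σ)..(b/σ), Real.exp (-(t^2)/2) :=
    intervalIntegral.integral_comp_div (f := fun t => Real.exp (-(t^2)/2)) hσ.ne'
  rw [h2, smul_eq_mul]
  field_simp

lemma nu_Ioc {σ : ℝ} (hσ : 0 < σ) {a b : ℝ} (hab : a ≤ b) :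
    ((gaussianReal 0 (Vv σ)) (Set.Ioc a b)).toReal
      = (Real.sqrt (2*π))⁻¹ * ∫ t in (a/σ)..(b/σ), Real.exp (-(t^2)/2) := by
  rw [gaussianReal_apply_eq_integral 0 (hV_ne hσ),
    ENNReal.toReal_ofReal (setIntegral_nonneg measurableSet_Ioc
      (fun x _ => gaussianPDFReal_nonneg 0 _ x)),
    ← intervalIntegral.integral_of_le hab, gauss_integral_interval hσ]

lemma exp_intble (a b : ℝ) : IntervalIntegrable (fun t => Real.exp (-(t^2)/2)) volume a b :=
  (Continuous.intervalIntegrable (by continuity) a b)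

lemma even_int (d : ℝ) : (∫ t in (-d)..d, Real.exp (-(t^2)/2))
    = 2 * ∫ t in (0:ℝ)..d, Real.exp (-(t^2)/2) := by
  have h1 : (∫ t in (-d)..(0:ℝ), Real.exp (-(t^2)/2))
      = ∫ t in (0:ℝ)..d, Real.exp (-(t^2)/2) := by
    have := intervalIntegral.integral_comp_neg (a := (0:ℝ)) (b := d)
      (fun t => Real.exp (-(t^2)/2))
    simp only [neg_zero] at this
    rw [← this]
    apply intervalIntegral.integral_congr
    intro x _
    simp [neg_sq]
  have h2 := intervalIntegral.integral_add_adjacent_intervals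
    (exp_intble (-d) 0) (exp_intble 0 d)
  linarith

lemma phi_half {σ : ℝ} (hσ : 0 < σ) (c : ℝ) :
    (Real.sqrt (2*π))⁻¹ * ∫ t in (0:ℝ)..(c/σ), Real.exp (-(t^2)/2) = phi σ (2*c) / 2 := by
  unfold phi
  have : (2*c)/(2*σ) = c/σ := by
    field_simp
  rw [this]
  field_simp

lemma nu_Ioc_sym {σ : ℝ} (hσ : 0 < σ) {c : ℝ} (hc : 0 ≤ c) :
    ((gaussianReal 0 (Vv σ)) (Set.Ioc (-c) c)).toReal = phi σ (2*c) := by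
  rw [nu_Ioc hσ (by linarith), show (-c)/σ = -(c/σ) from by ring, even_int]
  have := phi_half hσ (σ := σ) c
  linarith

lemma nu_neg {σ : ℝ} (s : Set ℝ) (hs : MeasurableSet s) :
    (gaussianReal 0 (Vv σ)) ((fun x => -x) ⁻¹' s) = (gaussianReal 0 (Vv σ)) s := by
  have hmap := gaussianReal_map_const_mul (μ := 0) (v := Vv σ) (-1)
  have hvv : (NNReal.mk ((-1:ℝ)^2) (sq_nonneg _) * (Vv σ) : ℝ≥0) = (Vv σ) := by
    ext; simp
  rw [hvv, mul_zero] at hmap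
  conv_rhs => rw [← hmap]
  rw [Measure.map_apply (by fun_prop) hs]
  congr 1
  ext x
  simp

lemma nu_Iic_zero {σ : ℝ} (hσ : 0 < σ) :
    ((gaussianReal 0 (Vv σ)) (Set.Iic 0)).toReal = 1/2 := by
  set ν := gaussianReal 0 (Vv σ)
  have hsing : ν {(0:ℝ)} = 0 :=
    gaussianReal_absolutelyContinuous 0 (hV_ne hσ) (measure_singleton 0)
  have h1 : ν (Set.Ici (0:ℝ)) = ν (Set.Iic (0:ℝ)) := by
    have : (fun x : ℝ => -x) ⁻¹' (Set.Iic 0) = Set.Ici 0 := by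
      ext x; simp
    rw [← this, nu_neg _ measurableSet_Iic]
  have h2 : ν (Set.Ioi (0:ℝ)) = ν (Set.Ici (0:ℝ)) :=
    measure_congr (Ioi_ae_eq_Ici' hsing)
  have h3 : ν (Set.Iic 0) + ν (Set.Ioi 0) = 1 := by
    rw [← measure_union (Set.Iic_disjoint_Ioi le_rfl) measurableSet_Ioi, Set.Iic_union_Ioi]
    exact measure_univ
  have hfin : ν (Set.Iic (0:ℝ)) ≠ ⊤ := measure_ne_top ν _
  have hfin2 : ν (Set.Ioi (0:ℝ)) ≠ ⊤ := measure_ne_top ν _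
  have := ENNReal.toReal_add hfin hfin2
  rw [h3] at this
  rw [h2, h1] at this
  simp at this
  linarith

lemma nu_sing {σ : ℝ} (hσ : 0 < σ) (x : ℝ) : (gaussianReal 0 (Vv σ)) {x} = 0 :=
  gaussianReal_absolutelyContinuous 0 (hV_ne hσ) (measure_singleton x)

lemma nu_Iic {σ : ℝ} (hσ : 0 < σ) {c : ℝ} (hc : 0 ≤ c) :
    ((gaussianReal 0 (Vv σ)) (Set.Iic c)).toReal = (1 + phi σ (2*c))/2 := by
  set ν := gaussianReal 0 (Vv σ) with hν
  have hsplit : ν (Set.Iic c) = ν (Set.Iic 0) + ν (Set.Ioc 0 c) := by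
    rw [← measure_union (Set.Iic_disjoint_Ioc le_rfl) measurableSet_Ioc,
      Set.Iic_union_Ioc_eq_Iic hc]
  have hIoc : (ν (Set.Ioc 0 c)).toReal = phi σ (2*c)/2 := by
    rw [hν, nu_Ioc hσ hc]
    have : (0:ℝ)/σ = 0 := by simp
    rw [this, phi_half hσ]
  have := ENNReal.toReal_add (measure_ne_top ν (Set.Iic 0)) (measure_ne_top ν (Set.Ioc 0 c))
  rw [← hsplit] at this
  rw [this, hIoc, hν, nu_Iic_zero hσ]
  ring

lemma nu_Ici {σ : ℝ} (hσ : 0 < σ) {c : ℝ} (hc : 0 ≤ c) :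
    ((gaussianReal 0 (Vv σ)) (Set.Ici (-c))).toReal = (1 + phi σ (2*c))/2 := by
  have h : (fun x : ℝ => -x) ⁻¹' (Set.Iic c) = Set.Ici (-c) := by
    ext x; simp [neg_le]
  rw [← h, nu_neg _ measurableSet_Iic, nu_Iic hσ hc]

lemma phi_pos {σ : ℝ} (hσ : 0 < σ) {r : ℝ} (hr : 0 < r) : 0 < phi σ r := by
  unfold phi
  have h1 : 0 < r / (2*σ) := by positivity
  have h2 : 0 < ∫ t in (0:ℝ)..(r/(2*σ)), Real.exp (-(t^2)/2) :=
    intervalIntegral.intervalIntegral_pos_of_pos_on (exp_intble 0 _)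
      (fun x _ => Real.exp_pos _) h1
  have h3 : 0 < Real.sqrt (2*π) := Real.sqrt_pos.mpr (by positivity)
  positivity

lemma phi_lt_one {σ : ℝ} (hσ : 0 < σ) {r : ℝ} (hr : 0 < r) : phi σ r < 1 := by
  set ν := gaussianReal 0 (Vv σ) with hν
  set c := r/2 with hcdef
  have hc : 0 < c := by positivity
  have hsplit : ν (Set.Ioi 0) = ν (Set.Ioc 0 c) + ν (Set.Ioi c) := by
    rw [← measure_union Set.Ioc_disjoint_Ioi_same measurableSet_Ioi,
      Set.Ioc_union_Ioi_eq_Ioi hc.le]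
  have hIoi0 : (ν (Set.Ioi 0)).toReal = 1/2 := by
    have h3 : ν (Set.Iic 0) + ν (Set.Ioi 0) = 1 := by
      rw [← measure_union (Set.Iic_disjoint_Ioi le_rfl) measurableSet_Ioi, Set.Iic_union_Ioi]
      exact measure_univ
    have := ENNReal.toReal_add (measure_ne_top ν (Set.Iic 0)) (measure_ne_top ν (Set.Ioi 0))
    rw [h3] at this
    simp only [ENNReal.toReal_one] at this
    have h4 := nu_Iic_zero hσ (σ := σ)
    rw [← hν] at h4
    linarith
  have hIoc : (ν (Set.Ioc 0 c)).toReal = phi σ r / 2 := by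
    rw [hν, nu_Ioc hσ hc.le]
    have h0 : (0:ℝ)/σ = 0 := by simp
    rw [h0, phi_half hσ, show 2*c = r from by rw [hcdef]; ring]
  have hpos : 0 < (ν (Set.Ioi c)).toReal := by
    apply ENNReal.toReal_pos _ (measure_ne_top ν _)
    intro h0
    have := gaussianReal_absolutelyContinuous' 0 (hV_ne hσ) (by rw [← hν]; exact h0)
    rw [Real.volume_Ioi] at this
    exact ENNReal.top_ne_zero this
  have := ENNReal.toReal_add (measure_ne_top ν (Set.Ioc 0 c)) (measure_ne_top ν (Set.Ioi c))
  rw [← hsplit] at this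
  rw [hIoi0, hIoc] at this
  linarith

lemma measure_E_interior {σ : ℝ} (hσ : 0 < σ) {r : ℝ} (hr : 0 < r) {a b m : ℤ}
    (ha : a < m) (hb : m < b) :
    ((gaussianReal 0 (Vv σ)) {t : ℝ | clampInt a b ((m : ℝ) + t / r) = m}).toReal = phi σ r := by
  set ν := gaussianReal 0 (Vv σ) with hν
  set c := r/2 with hc
  have hc0 : 0 < c := by positivity
  have hsub1 : Set.Ioo (-c) c ⊆ {t : ℝ | clampInt a b ((m : ℝ) + t / r) = m} := by
    intro t ht
    apply clamp_interior ha hb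
    rw [abs_div, abs_of_pos hr, div_lt_iff₀ hr]
    have : |t| < c := abs_lt.mpr ⟨ht.1, ht.2⟩
    rw [hc] at this; linarith
  have hsub2 : {t : ℝ | clampInt a b ((m : ℝ) + t / r) = m} ⊆ Set.Icc (-c) c := by
    intro t ht
    have h := clamp_interior_rev ha hb ht
    rw [abs_div, abs_of_pos hr, div_le_iff₀ hr] at h
    have : |t| ≤ c := by rw [hc]; linarith
    exact abs_le.mp this
  have h1 : ν (Set.Ioo (-c) c) = ν (Set.Icc (-c) c) :=
    measure_congr (Ioo_ae_eq_Icc' (nu_sing hσ _) (nu_sing hσ _))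
  have h2 : ν (Set.Ioc (-c) c) = ν (Set.Icc (-c) c) :=
    measure_congr (Ioc_ae_eq_Icc' (nu_sing hσ _))
  have heq : ν {t : ℝ | clampInt a b ((m : ℝ) + t / r) = m} = ν (Set.Ioc (-c) c) := by
    apply le_antisymm
    · rw [h2]; exact measure_mono hsub2
    · rw [h2, ← h1]; exact measure_mono hsub1
  rw [heq, hν, nu_Ioc_sym hσ hc0.le, show 2*c = r from by rw [hc]; ring]

lemma measure_E_left {σ : ℝ} (hσ : 0 < σ) {r : ℝ} (hr : 0 < r) {a b : ℤ} (hab : a < b) :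
    ((gaussianReal 0 (Vv σ)) {t : ℝ | clampInt a b ((a : ℝ) + t / r) = a}).toReal
      = (1 + phi σ r)/2 := by
  set ν := gaussianReal 0 (Vv σ) with hν
  set c := r/2 with hc
  have hc0 : 0 < c := by positivity
  have hsub1 : Set.Iio c ⊆ {t : ℝ | clampInt a b ((a : ℝ) + t / r) = a} := by
    intro t ht
    apply clamp_left
    rw [div_lt_iff₀ hr]
    have : t < c := ht
    rw [hc] at this; linarith
  have hsub2 : {t : ℝ | clampInt a b ((a : ℝ) + t / r) = a} ⊆ Set.Iic c := by
    intro t ht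
    have h := clamp_left_rev hab ht
    rw [div_le_iff₀ hr] at h
    show t ≤ c
    rw [hc]; linarith
  have h1 : ν (Set.Iio c) = ν (Set.Iic c) := measure_congr (Iio_ae_eq_Iic' (nu_sing hσ _))
  have heq : ν {t : ℝ | clampInt a b ((a : ℝ) + t / r) = a} = ν (Set.Iic c) := by
    apply le_antisymm (measure_mono hsub2)
    rw [← h1]; exact measure_mono hsub1
  rw [heq, hν, nu_Iic hσ hc0.le, show 2*c = r from by rw [hc]; ring]

lemma measure_E_right {σ : ℝ} (hσ : 0 < σ) {r : ℝ} (hr : 0 < r) {a b : ℤ} (hab : a < b) :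
    ((gaussianReal 0 (Vv σ)) {t : ℝ | clampInt a b ((b : ℝ) + t / r) = b}).toReal
      = (1 + phi σ r)/2 := by
  set ν := gaussianReal 0 (Vv σ) with hν
  set c := r/2 with hc
  have hc0 : 0 < c := by positivity
  have hsub1 : Set.Ioi (-c) ⊆ {t : ℝ | clampInt a b ((b : ℝ) + t / r) = b} := by
    intro t ht
    apply clamp_right hab
    rw [lt_div_iff₀ hr]
    have : -c < t := ht
    rw [hc] at this; linarith
  have hsub2 : {t : ℝ | clampInt a b ((b : ℝ) + t / r) = b} ⊆ Set.Ici (-c) := by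
    intro t ht
    have h := clamp_right_rev hab ht
    rw [le_div_iff₀ hr] at h
    show -c ≤ t
    rw [hc]; linarith
  have h1 : ν (Set.Ioi (-c)) = ν (Set.Ici (-c)) := measure_congr (Ioi_ae_eq_Ici' (nu_sing hσ _))
  have heq : ν {t : ℝ | clampInt a b ((b : ℝ) + t / r) = b} = ν (Set.Ici (-c)) := by
    apply le_antisymm (measure_mono hsub2)
    rw [← h1]; exact measure_mono hsub1
  rw [heq, hν, nu_Ici hσ hc0.le, show 2*c = r from by rw [hc]; ring]

end Aux

/-- Lower and upper bounds on the success probability of the box-constrained Babai detector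
for a deterministic parameter, with the exact attainment conditions
(Corollary 2 of the paper). -/
theorem success_prob_boxBabai_bounds
    {n : ℕ} (hn : 1 ≤ n)
    (R : Matrix (Fin n) (Fin n) ℝ)
    (hupper : ∀ i j : Fin n, j < i → R i j = 0)
    (hdiag : ∀ i : Fin n, 0 < R i i)
    (σ : ℝ) (hσ : 0 < σ)
    (l u : Fin n → ℤ) (hlu : ∀ i, l i < u i)
    (xhat : Fin n → ℤ) (hxl : ∀ i, l i ≤ xhat i) (hxu : ∀ i, xhat i ≤ u i)
    {Ω : Type} [MeasurableSpace Ω] (P : Measure Ω) [IsProbabilityMeasure P]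
    (v : Ω → Fin n → ℝ) (hmv : Measurable v)
    (hv : Measure.map v P = Measure.pi fun _ : Fin n => gaussianReal 0 ⟨σ ^ 2, sq_nonneg σ⟩) :
    (∏ i, phi σ (R i i)) ≤ (P {ω | babaiDetector R l u (fun i => (R *ᵥ (fun j => (xhat j : ℝ))) i + v ω i) = xhat}).toReal
    ∧ (P {ω | babaiDetector R l u (fun i => (R *ᵥ (fun j => (xhat j : ℝ))) i + v ω i) = xhat}).toReal ≤ (2 ^ n : ℝ)⁻¹ * ∏ i, (1 + phi σ (R i i))
    ∧ ((P {ω | babaiDetector R l u (fun i => (R *ᵥ (fun j => (xhat j : ℝ))) i + v ω i) = xhat}).toReal = ∏ i, phi σ (R i i)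
        ↔ ∀ i, l i < xhat i ∧ xhat i < u i)
    ∧ ((P {ω | babaiDetector R l u (fun i => (R *ᵥ (fun j => (xhat j : ℝ))) i + v ω i) = xhat}).toReal = (2 ^ n : ℝ)⁻¹ * ∏ i, (1 + phi σ (R i i))
        ↔ ∀ i, xhat i = l i ∨ xhat i = u i) := by
  classical
  set E : Fin n → Set ℝ :=
    fun i => {t : ℝ | clampInt (l i) (u i) ((xhat i : ℝ) + t / R i i) = xhat i} with hE
  set ν : Measure ℝ := gaussianReal 0 (Vv σ) with hν
  set p : Fin n → ℝ := fun i => (ν (E i)).toReal with hp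
  have hmeasE : ∀ i, MeasurableSet (E i) := by
    intro i
    have h1 : Measurable fun t : ℝ => clampInt (l i) (u i) ((xhat i : ℝ) + t / R i i) :=
      (measurable_clampInt (l i) (u i)).comp (by fun_prop)
    exact h1 (measurableSet_singleton (xhat i))
  have hset : {ω | babaiDetector R l u (fun i => (R *ᵥ (fun j => (xhat j : ℝ))) i + v ω i) = xhat}
      = v ⁻¹' (Set.univ.pi E) := by
    ext ω
    simp only [Set.mem_setOf_eq, Set.mem_preimage, Set.mem_univ_pi]
    exact babai_success_iff R l u xhat hupper hdiag (v ω)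
  have hprob : (P {ω | babaiDetector R l u
      (fun i => (R *ᵥ (fun j => (xhat j : ℝ))) i + v ω i) = xhat}).toReal = ∏ i, p i := by
    rw [hset, ← Measure.map_apply hmv (MeasurableSet.univ_pi hmeasE), hv]
    have hpp : Measure.pi (fun _ : Fin n => gaussianReal 0 ⟨σ ^ 2, sq_nonneg σ⟩) (Set.univ.pi E)
        = ∏ i, ν (E i) := @Measure.pi_pi _ _ _ _ _ (fun _ => (inferInstance : SigmaFinite ν)) _
    rw [hpp, ENNReal.toReal_prod]
  -- per-coordinate values
  have hcase : ∀ i, (l i < xhat i ∧ xhat i < u i ∧ p i = phi σ (R i i))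
      ∨ ((xhat i = l i ∨ xhat i = u i) ∧ p i = (1 + phi σ (R i i))/2) := by
    intro i
    by_cases hil : xhat i = l i
    · right
      refine ⟨Or.inl hil, ?_⟩
      have hEi : E i = {t : ℝ | clampInt (l i) (u i) (((l i : ℤ) : ℝ) + t / R i i) = l i} := by
        simp only [hE, hil]
      show (ν (E i)).toReal = _
      rw [hEi, hν]
      exact measure_E_left hσ (hdiag i) (hlu i)
    by_cases hiu : xhat i = u i
    · right
      refine ⟨Or.inr hiu, ?_⟩
      have hEi : E i = {t : ℝ | clampInt (l i) (u i) (((u i : ℤ) : ℝ) + t / R i i) = u i} := by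
        simp only [hE, hiu]
      show (ν (E i)).toReal = _
      rw [hEi, hν]
      exact measure_E_right hσ (hdiag i) (hlu i)
    · left
      have h1 : l i < xhat i := lt_of_le_of_ne (hxl i) (fun h => hil h.symm)
      have h2 : xhat i < u i := lt_of_le_of_ne (hxu i) hiu
      refine ⟨h1, h2, ?_⟩
      show (ν (E i)).toReal = _
      have hEi : E i = {t : ℝ | clampInt (l i) (u i) ((xhat i : ℝ) + t / R i i) = xhat i} := rfl
      rw [hEi, hν]
      exact measure_E_interior hσ (hdiag i) h1 h2
  have hφpos : ∀ i, 0 < phi σ (R i i) := fun i => phi_pos hσ (hdiag i)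
  have hφlt1 : ∀ i, phi σ (R i i) < 1 := fun i => phi_lt_one hσ (hdiag i)
  have hpge : ∀ i, phi σ (R i i) ≤ p i := by
    intro i
    rcases hcase i with ⟨_, _, h⟩ | ⟨_, h⟩
    · rw [h]
    · rw [h]; linarith [hφlt1 i]
  have hple : ∀ i, p i ≤ (1 + phi σ (R i i))/2 := by
    intro i
    rcases hcase i with ⟨_, _, h⟩ | ⟨_, h⟩
    · rw [h]; linarith [hφlt1 i]
    · rw [h]
  have hppos : ∀ i, 0 < p i := fun i => lt_of_lt_of_le (hφpos i) (hpge i)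
  have hiff1 : ∀ i, (p i = phi σ (R i i) ↔ (l i < xhat i ∧ xhat i < u i)) := by
    intro i
    rcases hcase i with ⟨h1, h2, h3⟩ | ⟨h1, h2⟩
    · exact ⟨fun _ => ⟨h1, h2⟩, fun _ => h3⟩
    · constructor
      · intro h
        rw [h2] at h
        have := hφlt1 i
        linarith
      · intro ⟨ha, hb⟩
        rcases h1 with h | h
        · rw [h] at ha; exact absurd ha (lt_irrefl _)
        · rw [h] at hb; exact absurd hb (lt_irrefl _)
  have hiff2 : ∀ i, (p i = (1 + phi σ (R i i))/2 ↔ (xhat i = l i ∨ xhat i = u i)) := by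
    intro i
    rcases hcase i with ⟨h1, h2, h3⟩ | ⟨h1, h2⟩
    · constructor
      · intro h
        rw [h3] at h
        have := hφlt1 i
        linarith
      · intro h
        rcases h with h | h
        · rw [h] at h1; exact absurd h1 (lt_irrefl _)
        · rw [h] at h2; exact absurd h2 (lt_irrefl _)
    · exact ⟨fun _ => h1, fun _ => h2⟩
  have hhalf : ∏ i, (1 + phi σ (R i i))/2 = (2^n : ℝ)⁻¹ * ∏ i, (1 + phi σ (R i i)) := by
    rw [Finset.prod_div_distrib, Finset.prod_const, Finset.card_univ, Fintype.card_fin]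
    ring
  have hlow : ∏ i, phi σ (R i i) ≤ ∏ i, p i :=
    Finset.prod_le_prod (fun i _ => (hφpos i).le) (fun i _ => hpge i)
  have hupp : ∏ i, p i ≤ ∏ i, (1 + phi σ (R i i))/2 :=
    Finset.prod_le_prod (fun i _ => (hppos i).le) (fun i _ => hple i)
  rw [hprob]
  refine ⟨hlow, by rw [← hhalf]; exact hupp, ?_, ?_⟩
  · constructor
    · intro h
      by_contra hno
      push_neg at hno
      obtain ⟨i, hi⟩ := hno
      have hne : p i ≠ phi σ (R i i) := fun he => by
        obtain ⟨ha, hb⟩ := (hiff1 i).mp he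
        exact absurd hb (not_lt.mpr (hi ha))
      have hlt : phi σ (R i i) < p i := lt_of_le_of_ne (hpge i) (Ne.symm hne)
      have : ∏ i, phi σ (R i i) < ∏ i, p i :=
        Finset.prod_lt_prod (fun i _ => hφpos i) (fun i _ => hpge i)
          ⟨i, Finset.mem_univ i, hlt⟩
      rw [h] at this
      exact absurd this (lt_irrefl _)
    · intro h
      exact Finset.prod_congr rfl (fun i _ => (hiff1 i).mpr (h i))
  · rw [← hhalf]
    constructor
    · intro h
      by_contra hno
      push_neg at hno
      obtain ⟨i, hi⟩ := hno
      have hne : p i ≠ (1 + phi σ (R i i))/2 := fun he => absurd ((hiff2 i).mp he) (by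
        push_neg
        exact hi)
      have hlt : p i < (1 + phi σ (R i i))/2 := lt_of_le_of_ne (hple i) hne
      have : ∏ i, p i < ∏ i, (1 + phi σ (R i i))/2 :=
        Finset.prod_lt_prod (fun i _ => hppos i) (fun i _ => hple i)
          ⟨i, Finset.mem_univ i, hlt⟩
      rw [h] at this
      exact absurd this (lt_irrefl _)
    · intro h
      exact Finset.prod_congr rfl (fun i _ => (hiff2 i).mpr (h i))
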